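/- The number of n-qubit stabilizer states is C(n) = 2^n · ∏_{k=1}^{n} (2^k + 1). -/

import Mathlib

/-- The number of `k`-dimensional linear subspaces of `F_2^n`
    (the Gaussian binomial coefficient `binom(n,k)_2`). -/
noncomputable def gaussBinom2 (n k : ℕ) : ℕ :=
  Nat.card {V : Submodule (ZMod 2) (Fin n → ZMod 2) // Module.finrank (ZMod 2) V = k}

open Module Submodule Finset

section counting

variable (n k : ℕ)

abbrev LI (n k : ℕ) := {s : Fin k → (Fin n → ZMod 2) // LinearIndependent (ZMod 2) s}

noncomputable def spanMap (s : LI n k) :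
    {V : Submodule (ZMod 2) (Fin n → ZMod 2) // Module.finrank (ZMod 2) V = k} :=
  ⟨Submodule.span (ZMod 2) (Set.range s.1), by
    rw [finrank_span_eq_card s.2, Fintype.card_fin]⟩

def fiberEquiv (W : {V : Submodule (ZMod 2) (Fin n → ZMod 2) // Module.finrank (ZMod 2) V = k}) :
    {s : LI n k // spanMap n k s = W} ≃ {t : Fin k → W.1 // LinearIndependent (ZMod 2) t} where
  toFun s := ⟨fun i => ⟨s.1.1 i, by
      have h : Submodule.span (ZMod 2) (Set.range s.1.1) = W.1 :=
        congrArg Subtype.val s.2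
      exact h ▸ subset_span (Set.mem_range_self i)⟩, by
    apply LinearIndependent.of_comp W.1.subtype
    exact s.1.2⟩
  invFun t := ⟨⟨fun i => (t.1 i : Fin n → ZMod 2), t.2.map' W.1.subtype (ker_subtype _)⟩, by
    apply Subtype.ext
    show Submodule.span (ZMod 2) (Set.range fun i => ((t.1 i : Fin n → ZMod 2))) = W.1
    have h1 : Submodule.span (ZMod 2) (Set.range t.1) = ⊤ := by
      apply eq_top_of_finrank_eq
      rw [finrank_span_eq_card t.2, Fintype.card_fin, W.2]
    have h2 : (Set.range fun i => ((t.1 i : Fin n → ZMod 2))) = W.1.subtype '' (Set.range t.1) := by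
      rw [← Set.range_comp]; rfl
    rw [h2, Submodule.span_image, h1, Submodule.map_top, range_subtype]⟩
  left_inv s := by ext i; rfl
  right_inv t := by ext i; rfl

lemma card_LI_eq : Nat.card (LI n k) = gaussBinom2 n k * ∏ i ∈ range k, (2 ^ k - 2 ^ i) := by
  classical
  rw [Nat.card_congr (Equiv.sigmaFiberEquiv (spanMap n k)).symm]
  have hfib : ∀ W, Nat.card {s : LI n k // spanMap n k s = W}
      = ∏ i ∈ range k, (2 ^ k - 2 ^ i) := by
    intro W
    rw [Nat.card_congr (fiberEquiv n k W)]
    rw [card_linearIndependent (K := ZMod 2) (V := W.1) (k := k) (by rw [W.2])]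
    rw [← Fin.prod_univ_eq_prod_range]
    simp [ZMod.card, W.2]
  haveI : Fintype {V : Submodule (ZMod 2) (Fin n → ZMod 2) // Module.finrank (ZMod 2) V = k} :=
    Fintype.ofFinite _
  haveI : ∀ W, Fintype {s : LI n k // spanMap n k s = W} := fun W => Fintype.ofFinite _
  rw [Nat.card_eq_fintype_card, Fintype.card_sigma]
  simp only [← Nat.card_eq_fintype_card, hfib, Finset.sum_const, smul_eq_mul]
  simp [gaussBinom2, Nat.card_eq_fintype_card]

lemma card_LI_eq' (hk : k ≤ n) :
    Nat.card (LI n k) = ∏ i ∈ range k, (2 ^ n - 2 ^ i) := by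
  rw [card_linearIndependent (K := ZMod 2) (V := Fin n → ZMod 2) (k := k)
    (by rw [Module.finrank_fintype_fun_eq_card, Fintype.card_fin]; exact hk)]
  rw [← Fin.prod_univ_eq_prod_range]
  simp [ZMod.card, Module.finrank_fintype_fun_eq_card]

end counting

lemma tri_succ (j : ℕ) : (j + 1) * (j + 2) / 2 = j * (j + 1) / 2 + (j + 1) := by
  obtain ⟨c, hc⟩ := Nat.even_mul_succ_self j
  have hB : (j + 1) * (j + 2) = j * (j + 1) + 2 * (j + 1) := by ring
  omega

lemma tri (k : ℕ) : (k + 1) * k / 2 = k * (k - 1) / 2 + k := by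
  rcases k with _ | j
  · simp
  · have h1 : (j + 1 + 1) * (j + 1) = (j + 1) * j + 2 * (j + 1) := by ring
    obtain ⟨c, hc⟩ := Nat.even_mul_succ_self j
    have h2 : (j + 1) * j = j * (j + 1) := Nat.mul_comm _ _
    simp only [Nat.succ_sub_one]
    omega

lemma split_prod (m k : ℕ) (hk : k ≤ m) :
    ∏ i ∈ Finset.range k, (2 ^ m - 2 ^ i)
      = 2 ^ (k * (k - 1) / 2) * ∏ j ∈ Finset.Icc (m + 1 - k) m, (2 ^ j - 1) := by
  induction k with
  | zero =>
    rw [Finset.range_zero, Finset.prod_empty, Nat.sub_zero,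
      Finset.Icc_eq_empty (by omega), Finset.prod_empty]
    norm_num
  | succ k ih =>
    have hk' : k ≤ m := by omega
    rw [Finset.prod_range_succ, ih hk']
    have h1 : Finset.Icc (m + 1 - (k+1)) m = insert (m - k) (Finset.Icc (m + 1 - k) m) := by
      ext x; simp only [Finset.mem_Icc, Finset.mem_insert]; omega
    rw [h1, Finset.prod_insert (by simp only [Finset.mem_Icc]; omega)]
    have h2 : 2 ^ m - 2 ^ k = 2 ^ k * (2 ^ (m - k) - 1) := by
      rw [Nat.mul_sub, mul_one, ← pow_add]
      congr 2
      omega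
    have hrw : (k + 1) * (k + 1 - 1) / 2 = k * (k - 1) / 2 + k := by
      simpa using tri k
    rw [h2, hrw, pow_add]
    ring

lemma gauss_formula (n k : ℕ) (hk : k ≤ n) :
    gaussBinom2 n k * ∏ j ∈ Finset.Icc 1 k, (2 ^ j - 1)
      = ∏ j ∈ Finset.Icc (n + 1 - k) n, (2 ^ j - 1) := by
  have h1 := card_LI_eq n k
  have h2 := card_LI_eq' n k hk
  rw [h2, split_prod n k hk, split_prod k k le_rfl] at h1
  have hk1 : k + 1 - k = 1 := by omega
  rw [hk1] at h1
  apply Nat.eq_of_mul_eq_mul_left (pow_pos (by norm_num : (0:ℕ) < 2) (k * (k - 1) / 2))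
  rw [h1]
  ring

lemma D_pos (k : ℕ) : 0 < ∏ j ∈ Finset.Icc 1 k, (2 ^ j - 1) := by
  apply Finset.prod_pos
  intro j hj
  simp only [Finset.mem_Icc] at hj
  have : 2 ≤ 2 ^ j := by
    calc 2 = 2 ^ 1 := rfl
    _ ≤ 2 ^ j := Nat.pow_le_pow_right (by norm_num) hj.1
  omega

lemma gauss_bot (n : ℕ) : gaussBinom2 n 0 = 1 := by
  have := gauss_formula n 0 (Nat.zero_le n)
  rw [Finset.Icc_eq_empty (by omega : ¬ (1:ℕ) ≤ 0), Finset.prod_empty,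
    Finset.Icc_eq_empty (by omega : ¬ n + 1 - 0 ≤ n), Finset.prod_empty] at this
  simpa using this

lemma gauss_top (n : ℕ) : gaussBinom2 n n = 1 := by
  have h := gauss_formula n n le_rfl
  have hn : n + 1 - n = 1 := by omega
  rw [hn] at h
  have := D_pos n
  nlinarith [h, this]

lemma gauss_of_lt (n k : ℕ) (h : n < k) : gaussBinom2 n k = 0 := by
  rw [gaussBinom2]
  haveI : IsEmpty {V : Submodule (ZMod 2) (Fin n → ZMod 2) // Module.finrank (ZMod 2) V = k} := by
    constructor
    rintro ⟨V, hV⟩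
    have h1 : Module.finrank (ZMod 2) V ≤ Module.finrank (ZMod 2) (Fin n → ZMod 2) :=
      Submodule.finrank_le V
    rw [Module.finrank_fintype_fun_eq_card, Fintype.card_fin, hV] at h1
    omega
  exact Nat.card_of_isEmpty

lemma gauss_pascal (n j : ℕ) (hj : j ≤ n) :
    gaussBinom2 (n + 1) (j + 1) = gaussBinom2 n (j + 1) + 2 ^ (n - j) * gaussBinom2 n j := by
  rcases Nat.eq_or_lt_of_le hj with rfl | hlt
  · rw [gauss_top, gauss_of_lt _ _ (by omega : j < j + 1), gauss_top]
    simp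
  have hjn : j + 1 ≤ n := hlt
  apply Nat.eq_of_mul_eq_mul_right (D_pos (j + 1))
  have hL := gauss_formula (n + 1) (j + 1) (by omega)
  have hR1 := gauss_formula n (j + 1) hjn
  have hR2 := gauss_formula n j (by omega)
  have e1 : n + 1 + 1 - (j + 1) = n + 1 - j := by omega
  have e2 : n + 1 - (j + 1) = n - j := by omega
  rw [e1] at hL
  rw [e2] at hR1
  have hD : ∏ x ∈ Finset.Icc 1 (j + 1), (2 ^ x - 1)
      = (∏ x ∈ Finset.Icc 1 j, (2 ^ x - 1)) * (2 ^ (j + 1) - 1) :=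
    Finset.prod_Icc_succ_top (by omega) _
  have hE1 : ∏ x ∈ Finset.Icc (n + 1 - j) (n + 1), (2 ^ x - 1)
      = (∏ x ∈ Finset.Icc (n + 1 - j) n, (2 ^ x - 1)) * (2 ^ (n + 1) - 1) :=
    Finset.prod_Icc_succ_top (by omega) _
  have hE2 : Finset.Icc (n - j) n = insert (n - j) (Finset.Icc (n + 1 - j) n) := by
    ext x; simp only [Finset.mem_Icc, Finset.mem_insert]; omega
  have hE2' : ∏ x ∈ Finset.Icc (n - j) n, (2 ^ x - 1)
      = (2 ^ (n - j) - 1) * ∏ x ∈ Finset.Icc (n + 1 - j) n, (2 ^ x - 1) := by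
    rw [hE2, Finset.prod_insert (by simp only [Finset.mem_Icc]; omega)]
  rw [hL, hE1, add_mul, hR1, hE2', hD]
  have key : (2:ℕ) ^ (n + 1) - 1 = (2 ^ (n - j) - 1) + 2 ^ (n - j) * (2 ^ (j + 1) - 1) := by
    have hab : (2:ℕ) ^ (n - j) * 2 ^ (j + 1) = 2 ^ (n + 1) := by
      rw [← pow_add]; congr 1; omega
    have h1 : (1:ℕ) ≤ 2 ^ (j + 1) := Nat.one_le_two_pow
    have h2 : (1:ℕ) ≤ 2 ^ (n - j) := Nat.one_le_two_pow
    have h3 : (2:ℕ) ^ (n - j) ≤ 2 ^ (n + 1) := Nat.pow_le_pow_right (by norm_num) (by omega)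
    rw [Nat.mul_sub, mul_one, hab]
    omega
  rw [key, ← hR2]
  ring

lemma T_eq (n : ℕ) :
    ∑ k ∈ Finset.range (n + 1), 2 ^ (k * (k + 1) / 2) * gaussBinom2 n k
      = ∏ k ∈ Finset.Icc 1 n, (2 ^ k + 1) := by
  induction n with
  | zero => simp [gauss_top]
  | succ n ih =>
    rw [Finset.sum_range_succ']
    have hstep : ∀ i ∈ Finset.range (n + 1),
        2 ^ ((i + 1) * (i + 1 + 1) / 2) * gaussBinom2 (n + 1) (i + 1)
          = 2 ^ ((i + 1) * (i + 1 + 1) / 2) * gaussBinom2 n (i + 1)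
            + 2 ^ (n + 1) * (2 ^ (i * (i + 1) / 2) * gaussBinom2 n i) := by
      intro i hi
      simp only [Finset.mem_range] at hi
      rw [gauss_pascal n i (by omega), Nat.mul_add]
      congr 1
      have htri : (i + 1) * (i + 1 + 1) / 2 = i * (i + 1) / 2 + (i + 1) := tri_succ i
      rw [← mul_assoc, ← pow_add, htri]
      rw [show i * (i + 1) / 2 + (i + 1) + (n - i) = (n + 1) + i * (i + 1) / 2 by omega, pow_add]
      ring
    rw [Finset.sum_congr rfl hstep, Finset.sum_add_distrib, ← Finset.mul_sum, ih]
    have hsum1 : (∑ i ∈ Finset.range (n + 1),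
        2 ^ ((i + 1) * (i + 1 + 1) / 2) * gaussBinom2 n (i + 1))
          + 2 ^ (0 * (0 + 1) / 2) * gaussBinom2 (n + 1) 0
        = ∏ k ∈ Finset.Icc 1 n, (2 ^ k + 1) := by
      rw [gauss_bot]
      have : (∑ i ∈ Finset.range (n + 1),
          2 ^ ((i + 1) * (i + 1 + 1) / 2) * gaussBinom2 n (i + 1)) + 2 ^ (0 * (0+1) / 2) * 1
          = ∑ k ∈ Finset.range (n + 2), 2 ^ (k * (k + 1) / 2) * gaussBinom2 n k := by
        rw [Finset.sum_range_succ' (fun k => 2 ^ (k * (k + 1) / 2) * gaussBinom2 n k) (n + 1)]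
        simp [gauss_bot]
      rw [this, Finset.sum_range_succ, gauss_of_lt n (n + 1) (by omega), ih]
      simp
    rw [add_right_comm, hsum1, Finset.prod_Icc_succ_top (by omega : 1 ≤ n + 1)]
    ring

/-- The number of `n`-qubit stabilizer states, written combinatorially as
    `∑_{k=0}^{n} C(n,k)` with `C(n,k) = 2^{n + k(k+1)/2} · binom(n,k)_2`,
    equals `C(n) = 2^n · ∏_{k=1}^{n} (2^k + 1)`. -/
theorem stabilizer_state_count (n : ℕ) :
    ∑ k ∈ Finset.range (n + 1), 2 ^ (n + k * (k + 1) / 2) * gaussBinom2 n k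
      = 2 ^ n * ∏ k ∈ Finset.Icc 1 n, (2 ^ k + 1) := by
  have : ∀ k, 2 ^ (n + k * (k + 1) / 2) * gaussBinom2 n k
      = 2 ^ n * (2 ^ (k * (k + 1) / 2) * gaussBinom2 n k) := by
    intro k; rw [pow_add]; ring
  simp_rw [this, ← Finset.mul_sum, T_eq]
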